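/- Let A, M, F be n×n real matrices, ε ∈ (0, 1/2), and suppose for each column k: ‖A m_k − e_k‖₂ ≤ ε and ‖f_k‖₁ ≤ ε/‖A‖₁, where m_k, f_k are the k-th columns of M and F. If additionally each residual column A(m_k − f_k) − e_k has at most p_d nonzero entries and 2√(p_d) ε < 1, then ‖A(M − F) − I‖₁ ≤ 2√(p_d) ε < 1 and, assuming A is invertible, M − F is nonsingular with ‖(M − F) − A⁻¹‖₁/‖A⁻¹‖₁ ≤ 2√(p_d) ε. -/
import Mathlib


/-- The ℓ¹ norm on `ℝⁿ`. -/
def l1norm {n : ℕ} (x : Fin n → ℝ) : ℝ := ∑ i, |x i|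

/-- The Euclidean (ℓ²) norm on `ℝⁿ`. -/
noncomputable def l2norm {n : ℕ} (x : Fin n → ℝ) : ℝ := Real.sqrt (∑ i, (x i) ^ 2)

/-- The induced matrix 1-norm: the maximum absolute column sum. -/
def mat1norm {n : ℕ} [NeZero n] (A : Matrix (Fin n) (Fin n) ℝ) : ℝ :=
  Finset.univ.sup' Finset.univ_nonempty fun j => ∑ i, |A i j|

lemma l1norm_nonneg {n : ℕ} (x : Fin n → ℝ) : 0 ≤ l1norm x :=
  Finset.sum_nonneg fun i _ => abs_nonneg _

lemma col_le_mat1norm {n : ℕ} [NeZero n] (A : Matrix (Fin n) (Fin n) ℝ) (j : Fin n) :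
    ∑ i, |A i j| ≤ mat1norm A :=
  Finset.le_sup' (fun j => ∑ i, |A i j|) (Finset.mem_univ j)

lemma mat1norm_le_iff {n : ℕ} [NeZero n] {A : Matrix (Fin n) (Fin n) ℝ} {c : ℝ} :
    mat1norm A ≤ c ↔ ∀ j, ∑ i, |A i j| ≤ c := by
  simp [mat1norm, Finset.sup'_le_iff]

lemma mat1norm_nonneg {n : ℕ} [NeZero n] (A : Matrix (Fin n) (Fin n) ℝ) :
    0 ≤ mat1norm A := by
  obtain ⟨j⟩ : Nonempty (Fin n) := Finset.univ_nonempty.to_subtype.map (fun x => x.1)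
  exact le_trans (Finset.sum_nonneg fun i _ => abs_nonneg _) (col_le_mat1norm A j)

lemma mulVec_l1_le {n : ℕ} [NeZero n] (A : Matrix (Fin n) (Fin n) ℝ) (x : Fin n → ℝ) :
    l1norm (A.mulVec x) ≤ mat1norm A * l1norm x := by
  have h1 : l1norm (A.mulVec x) ≤ ∑ j, (∑ i, |A i j|) * |x j| := by
    unfold l1norm Matrix.mulVec dotProduct
    calc ∑ i, |∑ j, A i j * x j| ≤ ∑ i, ∑ j, |A i j * x j| :=
          Finset.sum_le_sum fun i _ => Finset.abs_sum_le_sum_abs _ _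
      _ = ∑ j, (∑ i, |A i j|) * |x j| := by
          rw [Finset.sum_comm]
          simp [Finset.sum_mul, abs_mul]
  refine h1.trans ?_
  rw [l1norm, Finset.mul_sum]
  exact Finset.sum_le_sum fun j _ =>
    mul_le_mul_of_nonneg_right (col_le_mat1norm A j) (abs_nonneg _)

lemma mat1norm_mul_le {n : ℕ} [NeZero n] (A B : Matrix (Fin n) (Fin n) ℝ) :
    mat1norm (A * B) ≤ mat1norm A * mat1norm B := by
  rw [mat1norm_le_iff]
  intro j
  have hc : ∀ i, (A * B) i j = A.mulVec (fun l => B l j) i := by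
    intro i; simp [Matrix.mul_apply, Matrix.mulVec, dotProduct]
  calc ∑ i, |(A * B) i j| = l1norm (A.mulVec (fun l => B l j)) := by
        unfold l1norm; exact Finset.sum_congr rfl fun i _ => by rw [hc]
    _ ≤ mat1norm A * l1norm (fun l => B l j) := mulVec_l1_le A _
    _ ≤ mat1norm A * mat1norm B :=
        mul_le_mul_of_nonneg_left (col_le_mat1norm B j) (mat1norm_nonneg A)

lemma l1norm_pos {n : ℕ} {x : Fin n → ℝ} (hx : x ≠ 0) : 0 < l1norm x := by
  obtain ⟨i, hi⟩ : ∃ i, x i ≠ 0 := by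
    by_contra h; push_neg at h; exact hx (funext h)
  have : |x i| ≤ l1norm x :=
    Finset.single_le_sum (f := fun i => |x i|) (fun i _ => abs_nonneg _) (Finset.mem_univ i)
  have := abs_pos.mpr hi
  linarith

/-- Combined result: column-wise accuracy of `M` plus the dropping bound
`‖f_k‖₁ ≤ ε/‖A‖₁` and a sparsity bound `p_d` on the residual columns of
`M − F` give `‖A(M − F) − I‖₁ ≤ 2√p_d ε`, nonsingularity of `M − F` and the
relative error bound `‖(M − F) − A⁻¹‖₁/‖A⁻¹‖₁ ≤ 2√p_d ε`. -/
theorem stmt13 {n : ℕ} [NeZero n] (A M F : Matrix (Fin n) (Fin n) ℝ)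
    (hA : 0 < mat1norm A) (hAinv : IsUnit A)
    (ε : ℝ) (hε0 : 0 < ε) (hε1 : ε < 1 / 2)
    (pd : ℕ) (hpd : 0 < pd)
    (hm : ∀ k : Fin n,
      l2norm (A.mulVec (fun i => M i k) - Pi.single k 1) ≤ ε)
    (hf : ∀ k : Fin n, l1norm (fun i => F i k) ≤ ε / mat1norm A)
    (hnnz : ∀ k : Fin n,
      (Finset.univ.filter
        (fun j => ((A.mulVec (fun i => (M - F) i k) - Pi.single k 1 : Fin n → ℝ)) j ≠ 0)).card ≤ pd)
    (hsmall : 2 * Real.sqrt pd * ε < 1) :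
    mat1norm (A * (M - F) - 1) ≤ 2 * Real.sqrt pd * ε ∧
      IsUnit (M - F) ∧
      mat1norm ((M - F) - A⁻¹) / mat1norm A⁻¹ ≤ 2 * Real.sqrt pd * ε := by
  have hpd1 : (1 : ℝ) ≤ Real.sqrt pd := by
    rw [show (1:ℝ) = Real.sqrt 1 by simp]
    exact Real.sqrt_le_sqrt (by exact_mod_cast hpd)
  set E : Matrix (Fin n) (Fin n) ℝ := A * (M - F) - 1 with hE
  -- the key column bound
  have hEbound : mat1norm E ≤ 2 * Real.sqrt pd * ε := by
    rw [mat1norm_le_iff]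
    intro k
    set r : Fin n → ℝ := A.mulVec (fun i => (M - F) i k) - Pi.single k 1 with hr
    have hcol : ∀ i, E i k = r i := by
      intro i
      simp [hE, hr, Matrix.sub_apply, Matrix.mul_apply, Matrix.mulVec, dotProduct,
        Matrix.one_apply, Pi.single_apply, eq_comm]
    set g : Fin n → ℝ := A.mulVec (fun i => M i k) - Pi.single k 1 with hg
    set h : Fin n → ℝ := A.mulVec (fun i => F i k) with hh
    have hgh : ∀ i, r i = g i - h i := by
      intro i
      simp only [hr, hg, hh, Pi.sub_apply, Matrix.mulVec, dotProduct,
        Matrix.sub_apply]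
      have : ∑ j, A i j * (M j k - F j k)
          = (∑ j, A i j * M j k) - ∑ j, A i j * F j k := by
        rw [← Finset.sum_sub_distrib]
        exact Finset.sum_congr rfl fun j _ => by ring
      rw [this]; ring
    set S : Finset (Fin n) := Finset.univ.filter (fun j => r j ≠ 0) with hS
    have hcard : (S.card : ℝ) ≤ pd := by exact_mod_cast hnnz k
    -- restrict sum to support
    have hsum : ∑ i, |E i k| = ∑ i ∈ S, |r i| := by
      rw [Finset.sum_congr rfl fun i _ => by rw [hcol]]
      rw [← Finset.sum_filter_add_sum_filter_not Finset.univ (fun j => r j ≠ 0)]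
      have : ∑ i ∈ Finset.univ.filter (fun j => ¬ r j ≠ 0), |r i| = 0 := by
        apply Finset.sum_eq_zero
        intro i hi
        simp only [Finset.mem_filter, not_not] at hi
        simp [hi.2]
      rw [this, add_zero]
    -- Cauchy–Schwarz part
    have hCS : ∑ i ∈ S, |g i| ≤ Real.sqrt pd * ε := by
      have h2 : (∑ i ∈ S, |g i|) ^ 2 ≤ (S.card : ℝ) * ∑ i ∈ S, (g i) ^ 2 := by
        have := Finset.sum_mul_sq_le_sq_mul_sq S (fun i => |g i|) (fun _ => (1:ℝ))
        simpa [sq_abs, mul_comm] using this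
      have h3 : (∑ i ∈ S, (g i) ^ 2) ≤ ∑ i, (g i) ^ 2 :=
        Finset.sum_le_sum_of_subset_of_nonneg (Finset.subset_univ S)
          (fun i _ _ => sq_nonneg _)
      have hl2 : Real.sqrt (∑ i, (g i) ^ 2) ≤ ε := hm k
      have hnn : 0 ≤ ∑ i ∈ S, |g i| := Finset.sum_nonneg fun i _ => abs_nonneg _
      have h4 : ∑ i, (g i) ^ 2 ≤ ε ^ 2 := by
        have := Real.sqrt_le_sqrt (le_of_eq (rfl : ∑ i, (g i) ^ 2 = ∑ i, (g i) ^ 2))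
        have hnn2 : 0 ≤ ∑ i, (g i) ^ 2 := Finset.sum_nonneg fun i _ => sq_nonneg _
        nlinarith [Real.sq_sqrt hnn2, Real.sqrt_nonneg (∑ i, (g i) ^ 2)]
      have h5 : (∑ i ∈ S, |g i|) ^ 2 ≤ (pd : ℝ) * ε ^ 2 := by
        have hnn3 : 0 ≤ ∑ i ∈ S, (g i) ^ 2 := Finset.sum_nonneg fun i _ => sq_nonneg _
        nlinarith
      have h6 : (Real.sqrt pd * ε) ^ 2 = (pd : ℝ) * ε ^ 2 := by
        rw [mul_pow, Real.sq_sqrt (by positivity)]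
      have h7 : (∑ i ∈ S, |g i|) ^ 2 ≤ (Real.sqrt pd * ε) ^ 2 := h6 ▸ h5
      have h8 := Real.sqrt_le_sqrt h7
      rwa [Real.sqrt_sq hnn, Real.sqrt_sq (by positivity)] at h8
    -- dropped part
    have hdrop : ∑ i ∈ S, |h i| ≤ ε := by
      have h1 : ∑ i ∈ S, |h i| ≤ l1norm h :=
        Finset.sum_le_sum_of_subset_of_nonneg (Finset.subset_univ S)
          (fun i _ _ => abs_nonneg _)
      have h2 : l1norm h ≤ mat1norm A * l1norm (fun i => F i k) := mulVec_l1_le A _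
      have h3 : mat1norm A * l1norm (fun i => F i k) ≤ mat1norm A * (ε / mat1norm A) :=
        mul_le_mul_of_nonneg_left (hf k) (le_of_lt hA)
      have h4 : mat1norm A * (ε / mat1norm A) = ε := by field_simp
      linarith
    calc ∑ i, |E i k| = ∑ i ∈ S, |r i| := hsum
      _ ≤ ∑ i ∈ S, (|g i| + |h i|) := by
          apply Finset.sum_le_sum
          intro i _
          rw [hgh i]
          exact abs_sub _ _
      _ = (∑ i ∈ S, |g i|) + ∑ i ∈ S, |h i| := Finset.sum_add_distrib
      _ ≤ Real.sqrt pd * ε + ε := by linarith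
      _ ≤ 2 * Real.sqrt pd * ε := by nlinarith
  have hElt1 : mat1norm E < 1 := lt_of_le_of_lt hEbound hsmall
  -- nonsingularity of M - F
  have hMF : IsUnit (M - F) := by
    rw [Matrix.isUnit_iff_isUnit_det, isUnit_iff_ne_zero]
    intro hdet
    obtain ⟨v, hv0, hv⟩ := (Matrix.exists_mulVec_eq_zero_iff).mpr hdet
    have hEv : E.mulVec v = -v := by
      rw [hE, Matrix.sub_mulVec, ← Matrix.mulVec_mulVec, hv, Matrix.mulVec_zero,
        Matrix.one_mulVec]
      simp
    have h1 : l1norm (E.mulVec v) ≤ mat1norm E * l1norm v := mulVec_l1_le E v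
    have h2 : l1norm (E.mulVec v) = l1norm v := by
      rw [hEv]; unfold l1norm; simp
    have h3 : 0 < l1norm v := l1norm_pos hv0
    nlinarith
  refine ⟨hEbound, hMF, ?_⟩
  -- relative error
  have hdetA : IsUnit A.det := (Matrix.isUnit_iff_isUnit_det A).mp hAinv
  have hinvmul : A⁻¹ * A = 1 := Matrix.nonsing_inv_mul A hdetA
  have hid : (M - F) - A⁻¹ = A⁻¹ * E := by
    rw [hE, Matrix.mul_sub, ← Matrix.mul_assoc, hinvmul, Matrix.one_mul, Matrix.mul_one]
  have hb : mat1norm ((M - F) - A⁻¹) ≤ mat1norm A⁻¹ * mat1norm E := by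
    rw [hid]; exact mat1norm_mul_le _ _
  have hone : mat1norm (1 : Matrix (Fin n) (Fin n) ℝ) = 1 := by
    have : ∀ j : Fin n, ∑ i, |(1 : Matrix (Fin n) (Fin n) ℝ) i j| = 1 := by
      intro j
      rw [show (fun i => |(1 : Matrix (Fin n) (Fin n) ℝ) i j|)
          = fun i => if i = j then (1:ℝ) else 0 from funext fun i => by
          simp [Matrix.one_apply]; split <;> simp]
      simp
    unfold mat1norm
    rw [Finset.sup'_congr Finset.univ_nonempty rfl (fun j _ => this j)]
    simp
  have hApos : 0 < mat1norm A⁻¹ := by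
    by_contra hneg
    push_neg at hneg
    have h1 : mat1norm (A⁻¹ * A) ≤ mat1norm A⁻¹ * mat1norm A := mat1norm_mul_le _ _
    rw [hinvmul, hone] at h1
    nlinarith
  rw [div_le_iff₀ hApos]
  calc mat1norm ((M - F) - A⁻¹) ≤ mat1norm A⁻¹ * mat1norm E := hb
    _ ≤ mat1norm A⁻¹ * (2 * Real.sqrt pd * ε) :=
        mul_le_mul_of_nonneg_left hEbound (le_of_lt hApos)
    _ = 2 * Real.sqrt pd * ε * mat1norm A⁻¹ := by ring
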